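/- Let (G, B) be a metric n-Lie algebra with Levi decomposition G = S ⊕ R, where R is the radical and S is a strong semisimple subalgebra. Then G has no strong semisimple ideals if and only if R^⊥ ⊆ R. -/

import Mathlib

open scoped BigOperators

section NLiePreamble

variable {n : ℕ} {G : Type*} [AddCommGroup G] [Module ℂ G]

/-- The inner derivation `ad_y z = [y₁, …, y_{n+1}, z]` determined by an
`(n+2)`-ary alternating bracket. -/
def nAd (br : AlternatingMap ℂ G G (Fin (n + 2))) (y : Fin (n + 1) → G) (z : G) : G :=
  br (Fin.snoc y z)

/-- The generalized Jacobi identity: the bracket makes `G` an `(n+2)`-Lie algebra. -/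
def IsNLie (br : AlternatingMap ℂ G G (Fin (n + 2))) : Prop :=
  ∀ (x : Fin (n + 2) → G) (y : Fin (n + 1) → G),
    nAd br y (br x) = ∑ i, br (Function.update x i (nAd br y (x i)))

/-- A submodule `I` is an ideal: `[I, G, …, G] ⊆ I`. -/
def IsIdeal (br : AlternatingMap ℂ G G (Fin (n + 2))) (I : Submodule ℂ G) : Prop :=
  ∀ (y : Fin (n + 1) → G), ∀ x ∈ I, br (Fin.snoc y x) ∈ I

/-- Invariance of a bilinear form under the bracket. -/
def IsInvariantForm (br : AlternatingMap ℂ G G (Fin (n + 2)))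
    (K : LinearMap.BilinForm ℂ G) : Prop :=
  ∀ (x : Fin (n + 1) → G) (y₁ y₂ : G),
    K (br (Fin.snoc x y₁)) y₂ = - K (br (Fin.snoc x y₂)) y₁

/-- A metric on an `n`-Lie algebra: a nondegenerate invariant symmetric bilinear form. -/
def IsMetric (br : AlternatingMap ℂ G G (Fin (n + 2)))
    (B : LinearMap.BilinForm ℂ G) : Prop :=
  B.Nondegenerate ∧ (∀ x y : G, B x y = B y x) ∧ IsInvariantForm br B

/-- The span `[W₁, …, W_{n+2}]` of all brackets with entries in the given subspaces. -/
def bracketSpan (br : AlternatingMap ℂ G G (Fin (n + 2)))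
    (W : Fin (n + 2) → Submodule ℂ G) : Submodule ℂ G :=
  Submodule.span ℂ {z | ∃ w : Fin (n + 2) → G, (∀ i, w i ∈ W i) ∧ z = br w}

/-- The derived algebra `[G, …, G]`. -/
def derivedAlg (br : AlternatingMap ℂ G G (Fin (n + 2))) : Submodule ℂ G :=
  bracketSpan br fun _ => ⊤

/-- `[I, …, I]` for a subspace `I`. -/
def derivedStep (br : AlternatingMap ℂ G G (Fin (n + 2))) (I : Submodule ℂ G) :
    Submodule ℂ G :=
  bracketSpan br fun _ => I

/-- `[J, H, G, …, G]` for subspaces `J, H`. -/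
def pairBracket (br : AlternatingMap ℂ G G (Fin (n + 2))) (J H : Submodule ℂ G) :
    Submodule ℂ G :=
  bracketSpan br (Fin.cons J (Fin.cons H fun _ => (⊤ : Submodule ℂ G)))

/-- `[I, G, …, G]` for a subspace `I`. -/
def idealBracket (br : AlternatingMap ℂ G G (Fin (n + 2))) (I : Submodule ℂ G) :
    Submodule ℂ G :=
  bracketSpan br (Fin.cons I fun _ => (⊤ : Submodule ℂ G))

/-- The centralizer `C_G(I) = {x : [x, I, G, …, G] = 0}` of a subspace `I`. -/
def centralizer (br : AlternatingMap ℂ G G (Fin (n + 2))) (I : Submodule ℂ G) :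
    Submodule ℂ G where
  carrier := {x | ∀ v ∈ I, ∀ y : Fin n → G, br (Fin.cons x (Fin.cons v y)) = 0}
  add_mem' := by
    intro a b ha hb v hv y
    have := br.toMultilinearMap.cons_add (Fin.cons v y) a b
    simp only [AlternatingMap.coe_multilinearMap] at this
    rw [this, ha v hv y, hb v hv y, add_zero]
  zero_mem' := by
    intro v hv y
    have := br.toMultilinearMap.cons_smul (Fin.cons v y) (0 : ℂ) 0
    simpa using (br.toMultilinearMap.map_coord_zero (m := Fin.cons 0 (Fin.cons v y)) 0 rfl)
  smul_mem' := by
    intro c a ha v hv y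
    have := br.toMultilinearMap.cons_smul (Fin.cons v y) c a
    simp only [AlternatingMap.coe_multilinearMap] at this
    rw [this, ha v hv y, smul_zero]

/-- The center `C(G)`. -/
def center (br : AlternatingMap ℂ G G (Fin (n + 2))) : Submodule ℂ G :=
  centralizer br ⊤

/-- Nondegeneracy of `B` restricted to a subspace `W`. -/
def NondegOn (B : LinearMap.BilinForm ℂ G) (W : Submodule ℂ G) : Prop :=
  ∀ x ∈ W, (∀ y ∈ W, B x y = 0) → x = 0

/-- `(G, B)` is `B`-irreducible: no nontrivial nondegenerate ideals. -/
def BIrreducible (br : AlternatingMap ℂ G G (Fin (n + 2)))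
    (B : LinearMap.BilinForm ℂ G) : Prop :=
  ∀ I : Submodule ℂ G, IsIdeal br I → NondegOn B I → I = ⊥ ∨ I = ⊤

/-- `W` is a subalgebra. -/
def IsSubalgebra (br : AlternatingMap ℂ G G (Fin (n + 2))) (W : Submodule ℂ G) : Prop :=
  ∀ x : Fin (n + 2) → G, (∀ i, x i ∈ W) → br x ∈ W

/-- `I` is an ideal of the subalgebra `W`. -/
def IsIdealOf (br : AlternatingMap ℂ G G (Fin (n + 2))) (W I : Submodule ℂ G) : Prop :=
  I ≤ W ∧ ∀ (y : Fin (n + 1) → G), (∀ i, y i ∈ W) → ∀ x ∈ I, br (Fin.snoc y x) ∈ I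

/-- The subalgebra `W` is a simple `n`-Lie algebra. -/
def IsSimpleAlg (br : AlternatingMap ℂ G G (Fin (n + 2))) (W : Submodule ℂ G) : Prop :=
  derivedStep br W ≠ ⊥ ∧ ∀ I : Submodule ℂ G, IsIdealOf br W I → I = ⊥ ∨ I = W

/-- The subalgebra `W` is strong semisimple: a direct sum of simple ideals. -/
def IsStrongSemisimple (br : AlternatingMap ℂ G G (Fin (n + 2)))
    (W : Submodule ℂ G) : Prop :=
  ∃ (m : ℕ) (S : Fin m → Submodule ℂ G),
    (∀ i, IsIdealOf br W (S i) ∧ IsSimpleAlg br (S i)) ∧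
    iSupIndep S ∧ (⨆ i, S i) = W

/-- `I` is solvable (via the derived series). -/
def NLieSolvable (br : AlternatingMap ℂ G G (Fin (n + 2))) (I : Submodule ℂ G) : Prop :=
  ∃ k : ℕ, (derivedStep br)^[k] I = ⊥

/-- `R` is the radical: the maximal solvable ideal. -/
def NLieRadical (br : AlternatingMap ℂ G G (Fin (n + 2))) (R : Submodule ℂ G) : Prop :=
  IsIdeal br R ∧ NLieSolvable br R ∧
    ∀ I : Submodule ℂ G, IsIdeal br I → NLieSolvable br I → I ≤ R

/-- A Levi decomposition `G = S ⊕ R`. -/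
def IsLeviDecomp (br : AlternatingMap ℂ G G (Fin (n + 2)))
    (S R : Submodule ℂ G) : Prop :=
  NLieRadical br R ∧ IsSubalgebra br S ∧ IsStrongSemisimple br S ∧ IsCompl S R

/-- A minimal ideal of `G`. -/
def IsMinimalIdeal (br : AlternatingMap ℂ G G (Fin (n + 2))) (J : Submodule ℂ G) : Prop :=
  IsIdeal br J ∧ J ≠ ⊥ ∧
    ∀ I : Submodule ℂ G, IsIdeal br I → I ≤ J → I = ⊥ ∨ I = J

/-- The socle: the sum of all minimal ideals. -/
def socle (br : AlternatingMap ℂ G G (Fin (n + 2))) : Submodule ℂ G :=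
  sSup {J | IsMinimalIdeal br J}

/-- `H` is an `S`-submodule: `[S, …, S, H] ⊆ H`. -/
def IsSModule (br : AlternatingMap ℂ G G (Fin (n + 2))) (S H : Submodule ℂ G) : Prop :=
  ∀ (y : Fin (n + 1) → G), (∀ i, y i ∈ S) → ∀ x ∈ H, br (Fin.snoc y x) ∈ H

/-- `H` is an irreducible `S`-submodule. -/
def IsIrreducibleSModule (br : AlternatingMap ℂ G G (Fin (n + 2)))
    (S H : Submodule ℂ G) : Prop :=
  IsSModule br S H ∧ H ≠ ⊥ ∧
    ∀ K : Submodule ℂ G, K ≤ H → IsSModule br S K → K = ⊥ ∨ K = H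

/-- The space of invariant symmetric bilinear forms on `G`. -/
def invSymForms (br : AlternatingMap ℂ G G (Fin (n + 2))) :
    Submodule ℂ (LinearMap.BilinForm ℂ G) where
  carrier := {K | (∀ x y : G, K x y = K y x) ∧ IsInvariantForm br K}
  add_mem' := by
    rintro K L ⟨hK1, hK2⟩ ⟨hL1, hL2⟩
    refine ⟨fun x y => by simp [hK1 x y, hL1 x y], fun x y₁ y₂ => ?_⟩
    simp only [LinearMap.add_apply]
    rw [hK2 x y₁ y₂, hL2 x y₁ y₂]; ring
  zero_mem' := ⟨fun x y => by simp, fun x y₁ y₂ => by simp⟩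
  smul_mem' := by
    rintro c K ⟨hK1, hK2⟩
    refine ⟨fun x y => by simp [hK1 x y], fun x y₁ y₂ => ?_⟩
    simp only [LinearMap.smul_apply, smul_eq_mul]
    rw [hK2 x y₁ y₂]; ring

/-- The span of all nondegenerate invariant symmetric bilinear forms (the metric space `B(G)`). -/
def metricSpan (br : AlternatingMap ℂ G G (Fin (n + 2))) :
    Submodule ℂ (LinearMap.BilinForm ℂ G) :=
  Submodule.span ℂ {K : LinearMap.BilinForm ℂ G | IsMetric br K}

/-- `Γ_B(G)`: `B`-self-adjoint elements of the centroid. -/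
def centroidB (br : AlternatingMap ℂ G G (Fin (n + 2)))
    (B : LinearMap.BilinForm ℂ G) : Submodule ℂ (G →ₗ[ℂ] G) where
  carrier := {φ | (∀ (x : Fin (n + 1) → G) (z : G),
      φ (br (Fin.snoc x z)) = br (Fin.snoc x (φ z))) ∧
    ∀ x y : G, B (φ x) y = B x (φ y)}
  add_mem' := by
    rintro φ ψ ⟨hφ1, hφ2⟩ ⟨hψ1, hψ2⟩
    constructor
    · intro x z
      have hadd := br.toMultilinearMap.snoc_add x (φ z) (ψ z)
      simp only [AlternatingMap.coe_multilinearMap] at hadd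
      simp [hφ1 x z, hψ1 x z, hadd]
    · intro x y; simp [hφ2 x y, hψ2 x y]
  zero_mem' := by
    constructor
    · intro x z
      have h0 := br.toMultilinearMap.map_coord_zero (m := Fin.snoc x (0 : G)) (Fin.last _)
        (by simp)
      simp only [AlternatingMap.coe_multilinearMap] at h0
      simp [h0]
    · intro x y; simp
  smul_mem' := by
    rintro c φ ⟨hφ1, hφ2⟩
    constructor
    · intro x z
      have hs := br.toMultilinearMap.snoc_smul x c (φ z)
      simp only [AlternatingMap.coe_multilinearMap] at hs
      simp [hφ1 x z, hs]
    · intro x y; simp [hφ2 x y]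

end NLiePreamble


variable {n : ℕ} {G : Type*} [AddCommGroup G] [Module ℂ G]

section NLieHelpers

variable {n : ℕ} {G : Type*} [AddCommGroup G] [Module ℂ G]

private lemma snoc_mem_sub {T : Submodule ℂ G} {y : Fin (n+1) → G} {x : G}
    (hy : ∀ i, y i ∈ T) (hx : x ∈ T) :
    ∀ k : Fin (n+2), (Fin.snoc y x : Fin (n+2) → G) k ∈ T := by
  intro k
  rcases Fin.eq_castSucc_or_eq_last k with ⟨i, rfl⟩ | rfl
  · simpa using hy i
  · simpa using hx

private def snocLM (br : AlternatingMap ℂ G G (Fin (n + 2))) (y : Fin (n+1) → G) :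
    G →ₗ[ℂ] G where
  toFun z := br (Fin.snoc y z)
  map_add' a b := by
    have := br.toMultilinearMap.snoc_add y a b
    simpa only [AlternatingMap.coe_multilinearMap] using this
  map_smul' c a := by
    have := br.toMultilinearMap.snoc_smul y c a
    simpa only [AlternatingMap.coe_multilinearMap, RingHom.id_apply] using this

@[simp] private lemma snocLM_apply (br : AlternatingMap ℂ G G (Fin (n + 2)))
    (y : Fin (n+1) → G) (z : G) : snocLM br y z = br (Fin.snoc y z) := rfl

private def updLM (br : AlternatingMap ℂ G G (Fin (n + 2))) (w : Fin (n+2) → G)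
    (p : Fin (n+2)) : G →ₗ[ℂ] G where
  toFun v := br (Function.update w p v)
  map_add' a b := by
    have := br.toMultilinearMap.map_update_add w p a b
    simpa only [AlternatingMap.coe_multilinearMap] using this
  map_smul' c a := by
    have := br.toMultilinearMap.map_update_smul w p c a
    simpa only [AlternatingMap.coe_multilinearMap, RingHom.id_apply] using this

@[simp] private lemma updLM_apply (br : AlternatingMap ℂ G G (Fin (n + 2)))
    (w : Fin (n+2) → G) (p : Fin (n+2)) (v : G) :
    updLM br w p v = br (Function.update w p v) := rfl

/-- membership of a bracket in `I` when some entry (at any position) lies in `I`,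
given the snoc-form closure property, with all entries lying in an ambient `W`. -/
private lemma mem_of_entry (br : AlternatingMap ℂ G G (Fin (n+2))) {W I : Submodule ℂ G}
    (hcl : ∀ (y : Fin (n+1) → G), (∀ i, y i ∈ W) → ∀ x ∈ I, br (Fin.snoc y x) ∈ I)
    (w : Fin (n+2) → G) (hwW : ∀ i, w i ∈ W) (j : Fin (n+2)) (hw : w j ∈ I) :
    br w ∈ I := by
  have key : ∀ v : Fin (n+2) → G, (∀ i, v i ∈ W) → v (Fin.last (n+1)) ∈ I → br v ∈ I := by
    intro v hvW hvI
    have := hcl (Fin.init v) (fun i => hvW _) _ hvI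
    rwa [Fin.snoc_init_self] at this
  rcases eq_or_ne j (Fin.last (n+1)) with rfl | hne
  · exact key w hwW hw
  · set σ : Equiv.Perm (Fin (n+2)) := Equiv.swap j (Fin.last (n+1)) with hσ
    have hperm := br.map_perm w σ
    have hsign : Equiv.Perm.sign σ = -1 := Equiv.Perm.sign_swap hne
    have hlast : (w ∘ σ) (Fin.last (n+1)) = w j := by
      simp [hσ, Equiv.swap_apply_right]
    have hmem : br (w ∘ σ) ∈ I := key _ (fun i => hwW _) (by rw [hlast]; exact hw)
    rw [hsign] at hperm
    have heq : br w = - br (w ∘ σ) := by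
      rw [hperm]; simp
    rw [heq]
    exact neg_mem hmem

private lemma mem_derivedStep_gen (br : AlternatingMap ℂ G G (Fin (n+2)))
    {I : Submodule ℂ G} (w : Fin (n+2) → G) (hw : ∀ i, w i ∈ I) :
    br w ∈ derivedStep br I :=
  Submodule.subset_span ⟨w, hw, rfl⟩

private lemma derivedStep_le (br : AlternatingMap ℂ G G (Fin (n+2)))
    {I J : Submodule ℂ G}
    (h : ∀ w : Fin (n+2) → G, (∀ i, w i ∈ I) → br w ∈ J) : derivedStep br I ≤ J := by
  apply Submodule.span_le.2
  rintro z ⟨w, hw, rfl⟩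
  exact h w hw

private lemma derivedStep_mono (br : AlternatingMap ℂ G G (Fin (n+2)))
    {I J : Submodule ℂ G} (h : I ≤ J) : derivedStep br I ≤ derivedStep br J :=
  derivedStep_le br fun w hw => mem_derivedStep_gen br w fun i => h (hw i)

private lemma derivedStep_bot (br : AlternatingMap ℂ G G (Fin (n+2))) :
    derivedStep br (⊥ : Submodule ℂ G) = ⊥ :=
  le_bot_iff.1 <| derivedStep_le br fun w hw => by
    have h0 : w 0 = 0 := by simpa using hw 0
    have := br.toMultilinearMap.map_coord_zero (m := w) 0 h0
    simp only [AlternatingMap.coe_multilinearMap] at this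
    simp [this]

private lemma iterate_mono (br : AlternatingMap ℂ G G (Fin (n+2)))
    {I J : Submodule ℂ G} (h : I ≤ J) (k : ℕ) :
    (derivedStep br)^[k] I ≤ (derivedStep br)^[k] J := by
  induction k with
  | zero => simpa
  | succ k ih =>
    rw [Function.iterate_succ_apply', Function.iterate_succ_apply']
    exact derivedStep_mono br ih

private lemma iterate_perfect (br : AlternatingMap ℂ G G (Fin (n+2)))
    {T : Submodule ℂ G} (h : derivedStep br T = T) (k : ℕ) :
    (derivedStep br)^[k] T = T := by
  induction k with
  | zero => rfl
  | succ k ih => rw [Function.iterate_succ_apply', ih, h]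

private lemma isIdeal_derivedStep (br : AlternatingMap ℂ G G (Fin (n+2)))
    (hLie : IsNLie br) {I : Submodule ℂ G} (hI : IsIdeal br I) :
    IsIdeal br (derivedStep br I) := by
  intro y x hx
  have hx' : x ∈ Submodule.span ℂ
      {z | ∃ w : Fin (n+2) → G, (∀ i, w i ∈ I) ∧ z = br w} := hx
  clear hx
  induction hx' using Submodule.span_induction with
  | mem z hz =>
    obtain ⟨t, ht, rfl⟩ := hz
    show br (Fin.snoc y (br t)) ∈ _
    have hj := hLie t y
    rw [show br (Fin.snoc y (br t)) = nAd br y (br t) from rfl, hj]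
    apply Submodule.sum_mem
    intro i _
    apply mem_derivedStep_gen
    intro k
    rcases eq_or_ne k i with rfl | hk
    · rw [Function.update_self]
      exact hI y (t k) (ht k)
    · rw [Function.update_of_ne hk]
      exact ht k
  | zero =>
    have h0 : br (Fin.snoc y (0:G)) = 0 := by
      have := br.toMultilinearMap.map_coord_zero (m := Fin.snoc y (0:G))
        (Fin.last (n+1)) (by simp)
      simpa only [AlternatingMap.coe_multilinearMap] using this
    show br (Fin.snoc y (0:G)) ∈ _
    rw [h0]; exact zero_mem _
  | add a b ha hb iha ihb =>
    show br (Fin.snoc y (a+b)) ∈ _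
    have : br (Fin.snoc y (a+b)) = br (Fin.snoc y a) + br (Fin.snoc y b) :=
      (snocLM br y).map_add a b
    rw [this]; exact add_mem iha ihb
  | smul c a ha iha =>
    show br (Fin.snoc y (c • a)) ∈ _
    have : br (Fin.snoc y (c • a)) = c • br (Fin.snoc y a) :=
      (snocLM br y).map_smul c a
    rw [this]; exact Submodule.smul_mem _ c iha

private lemma closure_of_idealOf (br : AlternatingMap ℂ G G (Fin (n+2)))
    {Wamb T : Submodule ℂ G} (h : IsIdealOf br Wamb T) :
    ∀ x : Fin (n+2) → G, (∀ k, x k ∈ T) → br x ∈ T := by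
  intro x hx
  have := h.2 (Fin.init x) (fun k => h.1 (hx _)) (x (Fin.last (n+1))) (hx _)
  rwa [Fin.snoc_init_self] at this

private lemma derivedStep_eq_of_simple (br : AlternatingMap ℂ G G (Fin (n+2)))
    (hLie : IsNLie br) {T : Submodule ℂ G}
    (hcl : ∀ x : Fin (n+2) → G, (∀ k, x k ∈ T) → br x ∈ T)
    (hsimp : IsSimpleAlg br T) : derivedStep br T = T := by
  have hle : derivedStep br T ≤ T := derivedStep_le br hcl
  have hio : IsIdealOf br T (derivedStep br T) := by
    refine ⟨hle, ?_⟩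
    intro y hy x hx
    have hx' : x ∈ Submodule.span ℂ
        {z | ∃ w : Fin (n+2) → G, (∀ i, w i ∈ T) ∧ z = br w} := hx
    clear hx
    induction hx' using Submodule.span_induction with
    | mem z hz =>
      obtain ⟨t, ht, rfl⟩ := hz
      show br (Fin.snoc y (br t)) ∈ _
      have hj := hLie t y
      rw [show br (Fin.snoc y (br t)) = nAd br y (br t) from rfl, hj]
      apply Submodule.sum_mem
      intro i _
      apply mem_derivedStep_gen
      intro k
      rcases eq_or_ne k i with rfl | hk
      · rw [Function.update_self]
        exact hcl _ (snoc_mem_sub hy (ht k))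
      · rw [Function.update_of_ne hk]
        exact ht k
    | zero =>
      have h0 : br (Fin.snoc y (0:G)) = 0 := by
        have := br.toMultilinearMap.map_coord_zero (m := Fin.snoc y (0:G))
          (Fin.last (n+1)) (by simp)
        simpa only [AlternatingMap.coe_multilinearMap] using this
      show br (Fin.snoc y (0:G)) ∈ _
      rw [h0]; exact zero_mem _
    | add a b ha hb iha ihb =>
      show br (Fin.snoc y (a+b)) ∈ _
      have : br (Fin.snoc y (a+b)) = br (Fin.snoc y a) + br (Fin.snoc y b) :=
        (snocLM br y).map_add a b
      rw [this]; exact add_mem iha ihb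
    | smul c a ha iha =>
      show br (Fin.snoc y (c • a)) ∈ _
      have : br (Fin.snoc y (c • a)) = c • br (Fin.snoc y a) :=
        (snocLM br y).map_smul c a
      rw [this]; exact Submodule.smul_mem _ c iha
  rcases hsimp.2 _ hio with h | h
  · exact absurd h hsimp.1
  · exact h

private lemma exists_sum_of_mem_iSup' {m : ℕ} (Sc : Fin m → Submodule ℂ G) {x : G}
    (hx : x ∈ ⨆ i, Sc i) : ∃ f : Fin m → G, (∀ i, f i ∈ Sc i) ∧ x = ∑ i, f i := by
  let T : Submodule ℂ G := {
    carrier := {x | ∃ f : Fin m → G, (∀ i, f i ∈ Sc i) ∧ x = ∑ i, f i}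
    add_mem' := by
      rintro a b ⟨f, hf, rfl⟩ ⟨g, hg, rfl⟩
      exact ⟨f + g, fun i => add_mem (hf i) (hg i), by simp [Finset.sum_add_distrib]⟩
    zero_mem' := ⟨0, fun i => zero_mem _, by simp⟩
    smul_mem' := by
      rintro c a ⟨f, hf, rfl⟩
      exact ⟨c • f, fun i => Submodule.smul_mem _ c (hf i), by simp [Finset.smul_sum]⟩ }
  have hle : (⨆ i, Sc i) ≤ T := by
    apply iSup_le; intro i x hxi
    refine ⟨Pi.single i x, fun j => ?_, ?_⟩
    · rcases eq_or_ne j i with rfl | hj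
      · simpa using hxi
      · rw [Pi.single_eq_of_ne hj]; exact zero_mem _
    · rw [Finset.sum_eq_single i (fun b _ hb => by rw [Pi.single_eq_of_ne hb]) (by simp),
        Pi.single_eq_same]
  exact hle hx

end NLieHelpers

theorem no_strong_semisimple_ideal_iff_radical_coisotropic
    (br : AlternatingMap ℂ G G (Fin (n + 2))) (hLie : IsNLie br)
    [FiniteDimensional ℂ G]
    (B : LinearMap.BilinForm ℂ G) (hB : IsMetric br B)
    (S R : Submodule ℂ G) (hLevi : IsLeviDecomp br S R) :
    (∀ I : Submodule ℂ G, IsIdeal br I → IsStrongSemisimple br I → I = ⊥) ↔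
      B.orthogonal R ≤ R := by
  obtain ⟨hndg, hsym, hinv⟩ := hB
  obtain ⟨hRad, hSalg, hSss, hcompl⟩ := hLevi
  obtain ⟨hRideal, hRsolv, hRmax⟩ := hRad
  set H := B.orthogonal R with hH
  have hmemH : ∀ x, x ∈ H ↔ ∀ r ∈ R, B r x = 0 := by
    intro x
    constructor
    · intro h r hr
      exact LinearMap.BilinForm.mem_orthogonal_iff.1 h r hr
    · intro h
      exact LinearMap.BilinForm.mem_orthogonal_iff.2 (fun r hr => h r hr)
  have hBRH : ∀ z ∈ R, ∀ h ∈ H, B z h = 0 := fun z hz h hh => (hmemH h).1 hh z hz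
  have hBHR : ∀ z ∈ H, ∀ r ∈ R, B z r = 0 := fun z hz r hr => by
    rw [hsym]; exact hBRH r hr z hz
  have hHideal : IsIdeal br H := by
    intro y x hx
    rw [hmemH]
    intro r hr
    rw [hsym, hinv y x r, hBRH _ (hRideal y r hr) x hx, neg_zero]
  constructor
  · -- no strong semisimple ideals → R^⊥ ⊆ R
    intro hyp
    by_contra hnot
    -- the projection onto S along R
    set π : G →ₗ[ℂ] G := S.subtype ∘ₗ (S.projectionOnto R hcompl) with hπdef
    have hπmem : ∀ g, π g ∈ S := fun g => (S.projectionOnto R hcompl g).2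
    have hπS : ∀ s ∈ S, π s = s := by
      intro s hs
      show (↑(S.projectionOnto R hcompl s) : G) = s
      rw [show s = ((⟨s, hs⟩ : S) : G) from rfl, Submodule.linearProjOfIsCompl_apply_left]
    have hπR : ∀ r ∈ R, π r = 0 := by
      intro r hr
      show (↑(S.projectionOnto R hcompl r) : G) = 0
      rw [show r = ((⟨r, hr⟩ : R) : G) from rfl, Submodule.linearProjOfIsCompl_apply_right]
      simp
    have hsub : ∀ g, g - π g ∈ R := by
      intro g
      have hg : g ∈ S ⊔ R := by rw [hcompl.sup_eq_top]; trivial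
      obtain ⟨s, hs, r, hr, rfl⟩ := Submodule.mem_sup.1 hg
      have hπg : π (s + r) = s := by rw [map_add, hπS s hs, hπR r hr, add_zero]
      rw [hπg, add_sub_cancel_left]
      exact hr
    -- π is a homomorphism of brackets
    have hπbr : ∀ x : Fin (n+2) → G, π (br x) = br (π ∘ x) := by
      intro x
      have key : ∀ t : Finset (Fin (n+2)),
          br x - br (fun i => if i ∈ t then π (x i) else x i) ∈ R := by
        intro t
        induction t using Finset.induction_on with
        | empty => simp
        | @insert a t ha ih =>
          have hfun : (fun i => if i ∈ insert a t then π (x i) else x i)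
              = Function.update (fun i => if i ∈ t then π (x i) else x i) a (π (x a)) := by
            funext i
            rcases eq_or_ne i a with rfl | hia
            · simp [ha]
            · simp [Function.update_of_ne hia, Finset.mem_insert, hia]
          rw [hfun]
          set w : Fin (n+2) → G := fun i => if i ∈ t then π (x i) else x i with hw
          have hwa : w a = x a := by simp [hw, ha]
          have h2 := (updLM br w a).map_add (π (x a)) (x a - π (x a))
          simp only [updLM_apply] at h2
          have h3 : π (x a) + (x a - π (x a)) = x a := by abel
          rw [h3] at h2
          have hlhs : Function.update w a (x a) = w := by
            rw [← hwa]; exact Function.update_eq_self a w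
          rw [hlhs] at h2
          have hm : br (Function.update w a (x a - π (x a))) ∈ R := by
            apply mem_of_entry br (W := (⊤ : Submodule ℂ G))
              (fun y' _ x' hx' => hRideal y' x' hx') _ (fun _ => trivial) a
            rw [Function.update_self]
            exact hsub (x a)
          have heq : br x - br (Function.update w a (π (x a)))
              = (br x - br w) + br (Function.update w a (x a - π (x a))) := by
            rw [h2]; abel
          rw [heq]
          exact add_mem ih hm
      have hfin := key Finset.univ
      have hcast : (fun i => if i ∈ Finset.univ then π (x i) else x i) = π ∘ x := by
        funext i; simp
      rw [hcast] at hfin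
      have hS1 : br (π ∘ x) ∈ S := hSalg (π ∘ x) (fun i => hπmem _)
      have hz := hπR _ hfin
      rw [map_sub, sub_eq_zero] at hz
      rw [hz, hπS _ hS1]
    obtain ⟨m, Sc, hSc, hindep, hSsup⟩ := hSss
    have hScS : ∀ i, Sc i ≤ S := fun i => (hSc i).1.1
    have hIdealOfS : ∀ (I : Submodule ℂ G), IsIdeal br I →
        IsIdealOf br S (Submodule.map π I) := by
      intro I hI
      constructor
      · rintro x ⟨g, hg, rfl⟩; exact hπmem g
      · intro y hy x hx
        obtain ⟨g, hg, rfl⟩ := hx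
        have hcomp : br (Fin.snoc y (π g)) = π (br (Fin.snoc y g)) := by
          have hyy : (⇑π ∘ y : Fin (n+1) → G) = y := funext fun i => hπS (y i) (hy i)
          rw [hπbr, Fin.comp_snoc, hyy]
        rw [hcomp]
        exact Submodule.mem_map_of_mem (hI y g hg)
    have hcompcases : ∀ (K' : Submodule ℂ G), IsIdealOf br S K' →
        ∀ i, Sc i ⊓ K' = ⊥ ∨ Sc i ≤ K' := by
      intro K' hK' i
      have hii : IsIdealOf br (Sc i) (Sc i ⊓ K') := by
        refine ⟨inf_le_left, ?_⟩
        intro y hy x hx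
        exact ⟨(hSc i).1.2 y (fun k => hScS i (hy k)) x hx.1,
          hK'.2 y (fun k => hScS i (hy k)) x hx.2⟩
      rcases (hSc i).2.2 _ hii with h | h
      · exact Or.inl h
      · exact Or.inr (by rw [← h]; exact inf_le_right)
    have hbotK : ∀ (K' : Submodule ℂ G), IsIdealOf br S K' →
        (∀ i, Sc i ⊓ K' = ⊥) → K' = ⊥ := by
      intro K' hK' hcap
      rw [eq_bot_iff]
      intro k hk
      have hkS : k ∈ ⨆ i, Sc i := by rw [hSsup]; exact hK'.1 hk
      obtain ⟨f, hf, hkf⟩ := exists_sum_of_mem_iSup' Sc hkS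
      have hzero : ∀ j, f j = 0 := by
        intro j
        have hbr0 : ∀ y : Fin (n+1) → G, (∀ l, y l ∈ Sc j) →
            br (Fin.snoc y (f j)) = 0 := by
          intro y hy
          have hyS : ∀ l, y l ∈ S := fun l => hScS j (hy l)
          have h1 := map_sum (snocLM br y) f Finset.univ
          simp only [snocLM_apply] at h1
          have h2 : ∀ l, l ≠ j → br (Fin.snoc y (f l)) = 0 := by
            intro l hl
            have hm1 : br (Fin.snoc y (f l)) ∈ Sc j := by
              apply mem_of_entry br (W := S) (hSc j).1.2 _
                (snoc_mem_sub hyS (hScS l (hf l))) (Fin.castSucc 0)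
              rw [Fin.snoc_castSucc]; exact hy 0
            have hm2 : br (Fin.snoc y (f l)) ∈ Sc l := (hSc l).1.2 y hyS _ (hf l)
            have hd : Sc j ⊓ Sc l = ⊥ :=
              disjoint_iff.1 (hindep.pairwiseDisjoint (Ne.symm hl))
            have hmm : br (Fin.snoc y (f l)) ∈ Sc j ⊓ Sc l := ⟨hm1, hm2⟩
            rw [hd] at hmm; simpa using hmm
          have h3 : br (Fin.snoc y (f j)) = br (Fin.snoc y (∑ l, f l)) := by
            rw [h1, Finset.sum_eq_single j (fun b _ hb => h2 b hb) (by simp)]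
          have hm4 : br (Fin.snoc y (∑ l, f l)) ∈ Sc j ⊓ K' := by
            constructor
            · apply mem_of_entry br (W := S) (hSc j).1.2 _
                (snoc_mem_sub hyS (hK'.1 (hkf ▸ hk))) (Fin.castSucc 0)
              rw [Fin.snoc_castSucc]; exact hy 0
            · exact hK'.2 y hyS _ (hkf ▸ hk)
          rw [hcap j] at hm4
          rw [h3]; simpa using hm4
        have hNideal : IsIdealOf br (Sc j) (Submodule.span ℂ {f j}) := by
          constructor
          · rw [Submodule.span_le, Set.singleton_subset_iff]; exact hf j
          · intro y hy x hx
            obtain ⟨c, rfl⟩ := Submodule.mem_span_singleton.1 hx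
            have hsm : br (Fin.snoc y (c • f j)) = c • br (Fin.snoc y (f j)) :=
              (snocLM br y).map_smul c _
            rw [hsm, hbr0 y hy, smul_zero]
            exact zero_mem _
        rcases (hSc j).2.2 _ hNideal with h | h
        · have hfj : f j ∈ Submodule.span ℂ {f j} := Submodule.mem_span_singleton_self _
          rw [h] at hfj; simpa using hfj
        · exfalso
          apply (hSc j).2.1
          apply le_bot_iff.1
          apply derivedStep_le br
          intro w hw
          have h01 : (0 : Fin (n+2)) ≠ 1 := by
            intro hcon
            have := congrArg Fin.val hcon
            simp at this
          have hw0 : w 0 ∈ Submodule.span ℂ {f j} := by rw [h]; exact hw 0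
          have hw1 : w 1 ∈ Submodule.span ℂ {f j} := by rw [h]; exact hw 1
          obtain ⟨c₀, hc₀⟩ := Submodule.mem_span_singleton.1 hw0
          obtain ⟨c₁, hc₁⟩ := Submodule.mem_span_singleton.1 hw1
          have e0 : w = Function.update w 0 (c₀ • f j) := by
            rw [hc₀, Function.update_eq_self]
          have s1 : br w = c₀ • br (Function.update w 0 (f j)) := by
            conv_lhs => rw [e0]
            have := (updLM br w 0).map_smul c₀ (f j)
            simpa only [updLM_apply] using this
          have hval : (Function.update w 0 (f j)) 1 = c₁ • f j := by
            rw [Function.update_of_ne (Ne.symm h01), ← hc₁]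
          have e1 : Function.update w 0 (f j)
              = Function.update (Function.update w 0 (f j)) 1 (c₁ • f j) := by
            conv_lhs => rw [← Function.update_eq_self 1 (Function.update w 0 (f j))]
            rw [hval]
          have s2 : br (Function.update w 0 (f j))
              = c₁ • br (Function.update (Function.update w 0 (f j)) 1 (f j)) := by
            conv_lhs => rw [e1]
            have := (updLM br (Function.update w 0 (f j)) 1).map_smul c₁ (f j)
            simpa only [updLM_apply] using this
          have s3 : br (Function.update (Function.update w 0 (f j)) 1 (f j)) = 0 := by
            apply br.map_eq_zero_of_eq _ (i := 0) (j := 1) _ h01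
            rw [Function.update_of_ne h01, Function.update_self, Function.update_self]
          rw [s1, s2, s3, smul_zero, smul_zero]
          simp
      rw [hkf]
      simp [hzero]
    -- the derived algebra W of H
    have hWideal : IsIdeal br (derivedStep br H) := isIdeal_derivedStep br hLie hHideal
    set W := derivedStep br H with hWdef
    have hWH : W ≤ H := derivedStep_le br (fun w hw => by
      have := hHideal (Fin.init w) (w (Fin.last (n+1))) (hw _)
      rwa [Fin.snoc_init_self] at this)
    have hcaseb : ∀ i, Sc i ⊓ Submodule.map π H = ⊥ →
        ∀ z ∈ W, ∀ s ∈ Sc i, B z s = 0 := by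
      intro i hcap z hz s hs
      have hle : W ≤ LinearMap.ker (B.flip s) := by
        apply derivedStep_le br
        intro t ht
        rw [LinearMap.mem_ker]
        show B (br t) s = 0
        rw [show br t = br (Fin.snoc (Fin.init t) (t (Fin.last (n+1)))) by
          rw [Fin.snoc_init_self]]
        rw [hinv (Fin.init t) _ s]
        set u := br (Fin.snoc (Fin.init t) s) with hu
        have hπu : π u ∈ Sc i ⊓ Submodule.map π H := by
          have hπu1 : π u = br (Fin.snoc (π ∘ Fin.init t) s) := by
            rw [hu, hπbr, Fin.comp_snoc, hπS s (hScS i hs)]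
          constructor
          · rw [hπu1]
            exact (hSc i).1.2 (π ∘ Fin.init t) (fun k => hπmem _) s hs
          · rw [hπu1]
            apply mem_of_entry br (W := S) (hIdealOfS H hHideal).2 _
              (snoc_mem_sub (fun k => hπmem _) (hScS i hs)) (Fin.castSucc 0)
            rw [Fin.snoc_castSucc]
            exact ⟨Fin.init t 0, ht _, rfl⟩
        rw [hcap] at hπu
        have huR : u ∈ R := by
          have h0 : π u = 0 := by simpa using hπu
          have hs' := hsub u
          rwa [h0, sub_zero] at hs'
        rw [hBRH u huR _ (ht (Fin.last (n+1)))]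
        simp
      have hker := hle hz
      rw [LinearMap.mem_ker] at hker
      exact hker
    have hWR : W ⊓ R = ⊥ := by
      rw [eq_bot_iff]
      rintro z ⟨hzW, hzR⟩
      have hz0 : ∀ g, B z g = 0 := by
        intro g
        have hg : g ∈ S ⊔ R := by rw [hcompl.sup_eq_top]; trivial
        obtain ⟨s, hs, r, hr, rfl⟩ := Submodule.mem_sup.1 hg
        rw [map_add]
        have h1 : B z r = 0 := hBHR z (hWH hzW) r hr
        have h2 : B z s = 0 := by
          have hsS : s ∈ ⨆ i, Sc i := by rw [hSsup]; exact hs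
          obtain ⟨f, hf, rfl⟩ := exists_sum_of_mem_iSup' Sc hsS
          rw [map_sum]
          apply Finset.sum_eq_zero
          intro i _
          rcases hcompcases (Submodule.map π H) (hIdealOfS H hHideal) i with hcap | hle
          · exact hcaseb i hcap z hzW _ (hf i)
          · obtain ⟨h, hh, hfi⟩ := hle (hf i)
            rw [← hfi]
            have e : π h = h - (h - π h) := by abel
            rw [e, map_sub]
            rw [hBRH z hzR h hh, hBHR z (hWH hzW) _ (hsub h), sub_zero]
        rw [h1, h2, add_zero]
      have hz' := hndg.1 z hz0
      simp [hz']
    have hWne : W ≠ ⊥ := by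
      intro hbot
      apply hnot
      apply hRmax H hHideal
      exact ⟨1, by rw [Function.iterate_one]; exact hbot⟩
    have hKWne : Submodule.map π W ≠ ⊥ := by
      intro hbot
      apply hWne
      rw [eq_bot_iff]
      intro w hw
      have hπw : π w = 0 := by
        have hmem : π w ∈ Submodule.map π W := Submodule.mem_map_of_mem hw
        rw [hbot] at hmem; simpa using hmem
      have hwR : w ∈ R := by
        have := hsub w; rwa [hπw, sub_zero] at this
      have hmem : w ∈ W ⊓ R := ⟨hw, hwR⟩
      rw [hWR] at hmem; exact hmem
    obtain ⟨i₀, hi₀⟩ : ∃ i, Sc i ≤ Submodule.map π W := by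
      by_contra hcon
      push_neg at hcon
      apply hKWne
      apply hbotK _ (hIdealOfS W hWideal)
      intro i
      rcases hcompcases _ (hIdealOfS W hWideal) i with h | h
      · exact h
      · exact absurd h (hcon i)
    set I := W ⊓ Submodule.comap π (Sc i₀) with hIdef
    have hIW : I ≤ W := inf_le_left
    have hIπ : ∀ x ∈ I, π x ∈ Sc i₀ := fun x hx => hx.2
    have hIinj : ∀ x ∈ I, π x = 0 → x = 0 := by
      intro x hx h0
      have hxR : x ∈ R := by
        have := hsub x; rwa [h0, sub_zero] at this
      have hmem : x ∈ W ⊓ R := ⟨hx.1, hxR⟩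
      rw [hWR] at hmem; simpa using hmem
    have hlift : ∀ s ∈ Sc i₀, ∃ w, w ∈ I ∧ π w = s := by
      intro s hs
      obtain ⟨w, hw, hπw⟩ := hi₀ hs
      refine ⟨w, ⟨hw, ?_⟩, hπw⟩
      show π w ∈ Sc i₀
      rw [hπw]; exact hs
    have hIideal : IsIdeal br I := by
      intro y x hx
      constructor
      · exact hWideal y x hx.1
      · show π (br (Fin.snoc y x)) ∈ Sc i₀
        have hc : π (br (Fin.snoc y x)) = br (Fin.snoc (π ∘ y) (π x)) := by
          rw [hπbr, Fin.comp_snoc]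
        rw [hc]
        exact (hSc i₀).1.2 (π ∘ y) (fun k => hπmem _) _ (hIπ x hx)
    have hScne : (Sc i₀ : Submodule ℂ G) ≠ ⊥ := by
      intro hbot
      apply (hSc i₀).2.1
      rw [hbot]
      exact derivedStep_bot br
    have hIne : I ≠ ⊥ := by
      obtain ⟨s₀, hs₀, hs₀ne⟩ := (Submodule.ne_bot_iff _).1 hScne
      obtain ⟨w₀, hw₀, hπw₀⟩ := hlift s₀ hs₀
      rw [Submodule.ne_bot_iff]
      refine ⟨w₀, hw₀, ?_⟩
      intro hcon
      apply hs₀ne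
      rw [← hπw₀, hcon, map_zero]
    have hIsimple : IsSimpleAlg br I := by
      constructor
      · intro hbot
        apply (hSc i₀).2.1
        apply le_bot_iff.1
        have hle : derivedStep br (Sc i₀) ≤ Submodule.map π (derivedStep br I) := by
          apply derivedStep_le br
          intro t ht
          have hch : ∀ k, ∃ w, w ∈ I ∧ π w = t k := fun k => hlift _ (ht k)
          choose wv hwv hπwv using hch
          have hbt : br t = π (br wv) := by
            rw [hπbr]
            congr 1
            funext k
            exact (hπwv k).symm
          rw [hbt]
          exact Submodule.mem_map_of_mem (mem_derivedStep_gen br wv hwv)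
        rw [hbot, Submodule.map_bot] at hle
        exact hle
      · intro P hP
        have hP'ideal : IsIdealOf br (Sc i₀) (Submodule.map π P) := by
          constructor
          · rintro x ⟨p, hp, rfl⟩
            exact hIπ p (hP.1 hp)
          · intro y hy x hx
            obtain ⟨p, hp, rfl⟩ := hx
            have hch : ∀ k, ∃ w, w ∈ I ∧ π w = y k := fun k => hlift _ (hy k)
            choose wv hwv hπwv using hch
            have hbt : br (Fin.snoc y (π p)) = π (br (Fin.snoc wv p)) := by
              have hyy : (⇑π ∘ wv : Fin (n+1) → G) = y := funext fun k => hπwv k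
              rw [hπbr, Fin.comp_snoc, hyy]
            rw [hbt]
            exact Submodule.mem_map_of_mem (hP.2 wv hwv p hp)
        rcases (hSc i₀).2.2 _ hP'ideal with h | h
        · left
          rw [eq_bot_iff]
          intro p hp
          have hm : π p ∈ Submodule.map π P := Submodule.mem_map_of_mem hp
          rw [h] at hm
          have h0 : π p = 0 := by simpa using hm
          have := hIinj p (hP.1 hp) h0
          simp [this]
        · right
          apply le_antisymm hP.1
          intro x hx
          have hπx : π x ∈ Submodule.map π P := by rw [h]; exact hIπ x hx
          obtain ⟨p, hp, hπp⟩ := hπx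
          have hxp : x - p ∈ I := sub_mem hx (hP.1 hp)
          have h0 : π (x - p) = 0 := by rw [map_sub, hπp, sub_self]
          have hsub0 := hIinj _ hxp h0
          have hxep : x = p := by rwa [sub_eq_zero] at hsub0
          rw [hxep]; exact hp
    have hIss : IsStrongSemisimple br I := by
      refine ⟨1, fun _ => I,
        fun _ => ⟨⟨le_rfl, fun y hy x hx => hIideal y x hx⟩, hIsimple⟩, ?_, ?_⟩
      · intro j
        show Disjoint I (⨆ (l : Fin 1) (_ : l ≠ j), I)
        have hsup0 : (⨆ (l : Fin 1) (_ : l ≠ j), I) = ⊥ := by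
          apply le_bot_iff.1
          apply iSup_le; intro l
          apply iSup_le; intro hl
          exact absurd (Subsingleton.elim l j) hl
        rw [hsup0]
        exact disjoint_bot_right
      · exact iSup_const
    exact absurd (hyp I hIideal hIss) hIne
  · -- R^⊥ ⊆ R → no strong semisimple ideals
    intro hperp I hIideal hIss
    obtain ⟨m, T, hT, hTindep, hTsup⟩ := hIss
    have hTsub : ∀ j, ∀ x : Fin (n+2) → G, (∀ k, x k ∈ T j) → br x ∈ T j :=
      fun j => closure_of_idealOf br (hT j).1
    have hperf : ∀ j, derivedStep br (T j) = T j :=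
      fun j => derivedStep_eq_of_simple br hLie (hTsub j) (hT j).2
    have hIT : ∀ j, T j ≤ I := fun j => (hT j).1.1
    set J := I ⊓ R with hJ
    have hJideal : IsIdeal br J := fun y x hx =>
      ⟨hIideal y x hx.1, hRideal y x hx.2⟩
    have hTJ : ∀ j, T j ⊓ J = ⊥ := by
      intro j
      have hii : IsIdealOf br (T j) (T j ⊓ J) := by
        refine ⟨inf_le_left, ?_⟩
        intro y hy x hx
        exact ⟨hTsub j _ (snoc_mem_sub hy hx.1), hJideal y x hx.2⟩
      rcases (hT j).2.2 _ hii with h | h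
      · exact h
      · exfalso
        have hTle : T j ≤ R := by
          have h1 : T j ≤ J := by rw [← h]; exact inf_le_right
          exact le_trans h1 inf_le_right
        obtain ⟨k, hk⟩ := hRsolv
        have h1 : (derivedStep br)^[k] (T j) ≤ (derivedStep br)^[k] R :=
          iterate_mono br hTle k
        rw [hk, iterate_perfect br (hperf j) k] at h1
        have hTbot : T j = ⊥ := le_bot_iff.1 h1
        apply (hT j).2.1
        rw [hTbot]
        exact derivedStep_bot br
    have hcent : ∀ x ∈ J, ∀ y : Fin (n+1) → G, (∀ k, y k ∈ I) →
        br (Fin.snoc y x) = 0 := by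
      intro x hx y hy
      have hy0 : y 0 ∈ ⨆ j, T j := by rw [hTsup]; exact hy 0
      obtain ⟨f, hf, hsum⟩ := exists_sum_of_mem_iSup' T hy0
      set w : Fin (n+2) → G := Fin.snoc y x with hw
      have hc0 : w (Fin.castSucc 0) = y 0 := by rw [hw, Fin.snoc_castSucc]
      have hupd : w = Function.update w (Fin.castSucc 0) (∑ j, f j) := by
        rw [← hsum, ← hc0, Function.update_eq_self]
      have hsum2 := map_sum (updLM br w (Fin.castSucc 0)) f Finset.univ
      simp only [updLM_apply] at hsum2
      have hsplit : br w = ∑ j, br (Function.update w (Fin.castSucc 0) (f j)) := by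
        conv_lhs => rw [hupd]
        exact hsum2
      show br w = 0
      rw [hsplit]
      apply Finset.sum_eq_zero
      intro j _
      have hmemTj : br (Function.update w (Fin.castSucc 0) (f j)) ∈ T j := by
        apply mem_of_entry br (W := I) (hT j).1.2 _ ?_ (Fin.castSucc 0) ?_
        · intro k
          rcases eq_or_ne k (Fin.castSucc 0) with rfl | hk
          · rw [Function.update_self]; exact hIT j (hf j)
          · rw [Function.update_of_ne hk]
            rcases Fin.eq_castSucc_or_eq_last k with ⟨i, rfl⟩ | rfl
            · simpa [hw] using hy i
            · simpa [hw] using hx.1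
        · rw [Function.update_self]; exact hf j
      have hmemJ : br (Function.update w (Fin.castSucc 0) (f j)) ∈ J := by
        apply mem_of_entry br (W := (⊤ : Submodule ℂ G))
          (fun y' _ x' hx' => hJideal y' x' hx') _ (fun _ => trivial) (Fin.last (n+1))
        rw [Function.update_of_ne (Fin.castSucc_lt_last 0).ne', hw, Fin.snoc_last]
        exact hx
      have hmm : br (Function.update w (Fin.castSucc 0) (f j)) ∈ T j ⊓ J :=
        ⟨hmemTj, hmemJ⟩
      rw [hTJ j] at hmm
      simpa using hmm
    have hIle : I ≤ derivedStep br I := by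
      conv_lhs => rw [← hTsup]
      apply iSup_le
      intro j
      rw [← hperf j]
      exact derivedStep_mono br (hIT j)
    have hperp2 : ∀ x ∈ J, ∀ v ∈ derivedStep br I, B x v = 0 := by
      intro x hx v hv
      have hle : derivedStep br I ≤ LinearMap.ker (B x) := by
        apply derivedStep_le br
        intro t ht
        rw [LinearMap.mem_ker]
        rw [hsym]
        rw [show br t = br (Fin.snoc (Fin.init t) (t (Fin.last (n+1)))) by
          rw [Fin.snoc_init_self]]
        rw [hinv (Fin.init t) _ x]
        rw [hcent x hx (Fin.init t) (fun k => ht k.castSucc)]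
        simp
      have := hle hv
      rwa [LinearMap.mem_ker] at this
    have hIH : I ≤ H := by
      intro x hx
      rw [hmemH]
      intro r hr
      have hle : derivedStep br I ≤ LinearMap.ker (B r) := by
        apply derivedStep_le br
        intro t ht
        rw [LinearMap.mem_ker]
        rw [hsym]
        rw [show br t = br (Fin.snoc (Fin.init t) (t (Fin.last (n+1)))) by
          rw [Fin.snoc_init_self]]
        rw [hinv (Fin.init t) _ r]
        have hu : br (Fin.snoc (Fin.init t) r) ∈ J := by
          constructor
          · apply mem_of_entry br (W := (⊤ : Submodule ℂ G))
              (fun y' _ x' hx' => hIideal y' x' hx') _ (fun _ => trivial) (Fin.castSucc 0)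
            rw [Fin.snoc_castSucc]
            exact ht _
          · exact hRideal (Fin.init t) r hr
        rw [hperp2 _ hu _ (hIle (ht (Fin.last (n+1))))]
        simp
      have := hle (hIle hx)
      rwa [LinearMap.mem_ker] at this
    have hIR : I ≤ R := le_trans hIH hperp
    have hTbot : ∀ j, T j ≤ ⊥ := by
      intro j
      have h1 : T j ≤ J := le_inf (hIT j) (le_trans (hIT j) hIR)
      rw [← hTJ j]
      exact le_inf le_rfl h1
    rw [← hTsup]
    exact le_bot_iff.1 (iSup_le hTbot)
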